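/- Let J be a 3-dimensional nilpotent commutative ℝ-algebra with basis {n₁, n₂, n₃} and multiplication determined by n₁² = α n₃, n₂² = β n₃, n₁·n₂ = γ n₃, n₃² = n₁·n₃ = n₂·n₃ = 0 with β ≠ 0 and γ² − αβ > 0. Then J is isomorphic to the algebra J₂₆ with basis {N₁, N₂, N₃} and multiplication N₁·N₂ = N₃ and all other products of basis elements zero. -/

import Mathlib

/-- Nilpotent commutative multiplication on ℝ³ with n₁² = α n₃, n₂² = β n₃,
n₁·n₂ = γ n₃, n₃² = n₁·n₃ = n₂·n₃ = 0, where n₁ = (1,0,0), n₂ = (0,1,0), n₃ = (0,0,1). -/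
def mulNil (α β γ : ℝ) (x y : ℝ × ℝ × ℝ) : ℝ × ℝ × ℝ :=
  (0, 0, α * (x.1 * y.1) + β * (x.2.1 * y.2.1) + γ * (x.1 * y.2.1 + x.2.1 * y.1))

/-- Multiplication of J₂₆: n₁·n₂ = n₂·n₁ = n₃, all other basis products zero. -/
def mulJ26 (x y : ℝ × ℝ × ℝ) : ℝ × ℝ × ℝ :=
  (0, 0, x.1 * y.2.1 + x.2.1 * y.1)

/-- if β ≠ 0 and γ² − αβ > 0 then the nilpotent algebra with
n₁² = α n₃, n₂² = β n₃, n₁·n₂ = γ n₃ is isomorphic to J₂₆. -/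
theorem nilpotent_iso_J26 (α β γ : ℝ) (hβ : β ≠ 0) (hΔ : γ ^ 2 - α * β > 0) :
    ∃ φ : (ℝ × ℝ × ℝ) ≃ₗ[ℝ] (ℝ × ℝ × ℝ),
      ∀ x y : ℝ × ℝ × ℝ, φ (mulNil α β γ x y) = mulJ26 (φ x) (φ y) := by
  set s : ℝ := Real.sqrt (γ ^ 2 - α * β) with hs
  have hs0 : 0 < s := Real.sqrt_pos.mpr hΔ
  have hs2 : s ^ 2 = γ ^ 2 - α * β := Real.sq_sqrt hΔ.le
  have hsne : s ≠ 0 := ne_of_gt hs0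
  refine ⟨{
    toFun := fun x => (x.2.1 + ((γ + s)/β) * x.1,
      (β/2) * x.2.1 + ((γ - s)/2) * x.1, x.2.2),
    map_add' := by intro x y; simp [Prod.ext_iff]; constructor <;> ring,
    map_smul' := by intro c x; simp [Prod.ext_iff, smul_eq_mul]; constructor <;> ring,
    invFun := fun p => ((β/(2*s)) * p.1 - (1/s) * p.2.1,
      (-(γ - s)/(2*s)) * p.1 + ((γ + s)/(β*s)) * p.2.1, p.2.2),
    left_inv := by
      intro x
      simp only [Prod.ext_iff]
      refine ⟨?_, ?_, trivial⟩ <;> field_simp <;> ring,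
    right_inv := by
      intro p
      simp only [Prod.ext_iff]
      refine ⟨?_, ?_, trivial⟩ <;> field_simp <;> ring }, ?_⟩
  intro x y
  simp only [mulNil, mulJ26, LinearEquiv.coe_mk, LinearMap.coe_mk, AddHom.coe_mk,
    Prod.ext_iff]
  refine ⟨by ring, by ring, ?_⟩
  have h : (γ + s) * (γ - s) = α * β := by nlinarith [hs2]
  field_simp
  linear_combination (-2*x.1*y.1) * h
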